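/- arXiv:2506.23654 — 2 statements merged into one kernel-verified Lean document; each statement's English description precedes it below -/
import Mathlib

section
/- Let p : 𝒫^{<ω}(X) → U be an order-reversal into an ultrafilter U on I that possesses a support Φ = (Φ_i)_{i∈I}. Then the map p_Φ(Θ) := {i ∈ I : Θ ⊆ Φ_i} is an anti-additive, locally finite order-reversal into U with p_Φ ≤ p, and Φ is also a support of p_Φ. -/
/-- If an order-reversal `p : 𝒫^{<ω}(X) → U` possesses a support `Φ`, then
`p_Φ(Θ) := {i : Θ ⊆ Φ_i}` is an anti-additive, locally finite order-reversal into
`U` with `p_Φ ≤ p`, and `Φ` is also a support of `p_Φ`. -/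
theorem stmt13 {I X : Type*} [DecidableEq X] (U : Ultrafilter I)
    (p : Finset X → Set I)
    (hpU : ∀ s, p s ∈ U) (hrev : ∀ s t : Finset X, s ⊆ t → p t ⊆ p s)
    (Φ : I → Finset X) (hsupp1 : ∀ i, i ∈ p (Φ i))
    (hsupp2 : ∀ θ : X, {i | θ ∈ Φ i} ∈ U) :
    let pΦ : Finset X → Set I := fun Θ => {i | Θ ⊆ Φ i}
    (∀ Θ, pΦ Θ ∈ U) ∧
    (∀ Θ Θ', pΦ (Θ ∪ Θ') = pΦ Θ ∩ pΦ Θ') ∧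
    (∀ i, ∃ N : ℕ, ∀ Θ, i ∈ pΦ Θ → Θ.card ≤ N) ∧
    (∀ s t : Finset X, s ⊆ t → pΦ t ⊆ pΦ s) ∧
    (∀ Θ, pΦ Θ ⊆ p Θ) ∧
    (∀ i, i ∈ pΦ (Φ i)) := by
  intro pΦ
  refine ⟨?_, ?_, ?_, ?_, ?_, ?_⟩
  · intro Θ
    have : {i | Θ ⊆ Φ i} = ⋂ θ ∈ Θ, {i | θ ∈ Φ i} := by
      ext i; simp [Finset.subset_iff]
    have h : (⋂ θ ∈ Θ, {i | θ ∈ Φ i}) ∈ U :=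
      (Filter.biInter_mem Θ.finite_toSet).mpr fun θ _ => hsupp2 θ
    simpa [pΦ, this] using h
  · intro Θ Θ'
    ext i; simp [pΦ, Finset.union_subset_iff, Set.mem_inter_iff]
  · intro i
    exact ⟨(Φ i).card, fun Θ h => Finset.card_le_card h⟩
  · intro s t hst i hi
    exact hst.trans hi
  · intro Θ i hi
    exact hrev Θ (Φ i) hi (hsupp1 i)
  · intro i
    exact fun _ h => h
end

section
/- For every infinite cardinal κ there exists a countably incomplete ultrafilter on κ which is κ⁺-good: for every order-reversal p : 𝒫^{<ω}(κ) → U there is an anti-additive q : 𝒫^{<ω}(κ) → U with q ≤ p. -/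
open Cardinal Set Filter Ordinal
open scoped Classical
set_option linter.unusedSectionVars false

universe u

namespace Stmt19

variable {α : Type u} [Infinite α] [DecidableEq α]

variable (G : Set α → α → Finset α × ℕ)

/-- condition set: the points where each function indexed by `A ∈ T` takes value `v A`. -/
def Cond (T : Finset (Set α)) (v : Set α → Finset α × ℕ) : Set α :=
  {i | ∀ A ∈ T, G A i = v A}

/-- independent family of functions (Engelking–Karłowicz). -/
def Indep : Prop :=
  ∀ (T : Finset (Set α)) (v : Set α → Finset α × ℕ), ∃ i, ∀ A ∈ T, G A i = v A

/-- membership in the filter generated by `D`. -/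
def InGen (D : Set (Set α)) (X : Set α) : Prop :=
  ∃ E ⊆ D, E.Finite ∧ ⋂₀ E ⊆ X

/-- `K`-indexed functions are independent modulo the filter generated by `D`. -/
def Ind (D K : Set (Set α)) : Prop :=
  ∀ (T : Finset (Set α)) (v : Set α → Finset α × ℕ) (E : Set (Set α)),
    ↑T ⊆ K → E ⊆ D → E.Finite → (Cond G T v ∩ ⋂₀ E).Nonempty

def D0 : Set (Set α) := Set.range fun n : ℕ => {i | n ≤ (G ∅ i).2}

def K0 (α : Type u) : Set (Set α) := {(∅ : Set α)}ᶜ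

theorem exists_indep (α : Type u) [Infinite α] [DecidableEq α] :
    ∃ G : Set α → α → Finset α × ℕ, Indep G := by
  classical
  -- the domain used by the Engelking–Karłowicz construction
  let J : Type u := Σ s : Finset α, ({ t : Finset α // t ⊆ s } → Finset α × ℕ)
  have hfin : ∀ s : Finset α, Finite { t : Finset α // t ⊆ s } := by
    intro s
    refine Finite.of_injective (fun t (x : {x // x ∈ s}) => decide (x.1 ∈ t.1)) ?_
    intro t₁ t₂ h
    ext1
    ext x
    constructor
    · intro hx
      have hxs : x ∈ s := t₁.2 hx
      have := congrFun h ⟨x, hxs⟩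
      simp only [decide_eq_decide] at this
      exact this.1 hx
    · intro hx
      have hxs : x ∈ s := t₂.2 hx
      have := congrFun h ⟨x, hxs⟩
      simp only [decide_eq_decide] at this
      exact this.2 hx
  have hβ : #(Finset α × ℕ) = #α := by
    have : #(Finset α × ℕ) = #(Finset α) * ℵ₀ := by
      simp [mk_prod]
    rw [this, mk_finset_of_infinite]
    exact (mul_eq_max (aleph0_le_mk α) le_rfl).trans (max_eq_left (aleph0_le_mk α))
  have hJ : #J ≤ #α := by
    have h1 : #J = Cardinal.sum fun s : Finset α => #({ t : Finset α // t ⊆ s } → Finset α × ℕ) :=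
      mk_sigma _
    have h2 : ∀ s : Finset α, #({ t : Finset α // t ⊆ s } → Finset α × ℕ) ≤ #α := by
      intro s
      have := hfin s
      have harr : #({ t : Finset α // t ⊆ s } → Finset α × ℕ)
          = #(Finset α × ℕ) ^ #{ t : Finset α // t ⊆ s } := by
        rw [mk_arrow, Cardinal.lift_id, Cardinal.lift_id]
      rw [harr, hβ]
      exact pow_le (aleph0_le_mk α) (lt_aleph0_of_finite _)
    calc #J ≤ Cardinal.sum fun _ : Finset α => #α := h1 ▸ Cardinal.sum_le_sum _ _ h2
      _ = #(Finset α) * #α := Cardinal.sum_const' _ _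
      _ = #α := by rw [mk_finset_of_infinite]; exact mul_eq_self (aleph0_le_mk α)
  have hJne : Nonempty J := ⟨⟨∅, fun _ => (∅, 0)⟩⟩
  obtain ⟨emb⟩ : Nonempty (J ↪ α) := Cardinal.le_def _ _ |>.1 hJ
  let g : α → J := Function.invFun emb
  have hg : ∀ j : J, g (emb j) = j := Function.leftInverse_invFun emb.injective
  refine ⟨fun A i => (g i).2 ⟨(g i).1.filter (· ∈ A), Finset.filter_subset _ _⟩, ?_⟩
  intro T v
  -- a finite set separating the (distinct) members of T
  let c : Set α → Set α → α := fun A B =>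
    if h : ∃ x, ¬(x ∈ A ↔ x ∈ B) then h.choose else Classical.arbitrary α
  let s : Finset α := T.biUnion fun A => T.image fun B => c A B
  have sep : ∀ A ∈ T, ∀ B ∈ T, A ≠ B → s.filter (· ∈ A) ≠ s.filter (· ∈ B) := by
    intro A hA B hB hAB
    have hx : ∃ x, ¬(x ∈ A ↔ x ∈ B) := by
      by_contra h
      push_neg at h
      exact hAB (Set.ext h)
    have hcx : ¬(c A B ∈ A ↔ c A B ∈ B) := by
      simpa only [c, dif_pos hx] using hx.choose_spec
    have hcs : c A B ∈ s := by
      refine Finset.mem_biUnion.2 ⟨A, hA, Finset.mem_image.2 ⟨B, hB, rfl⟩⟩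
    intro h
    apply hcx
    constructor
    · intro hmem
      have : c A B ∈ s.filter (· ∈ A) := Finset.mem_filter.2 ⟨hcs, hmem⟩
      rw [h] at this
      exact (Finset.mem_filter.1 this).2
    · intro hmem
      have : c A B ∈ s.filter (· ∈ B) := Finset.mem_filter.2 ⟨hcs, hmem⟩
      rw [← h] at this
      exact (Finset.mem_filter.1 this).2
  let f0 : { t : Finset α // t ⊆ s } → Finset α × ℕ := fun t =>
    if h : ∃ A, A ∈ T ∧ s.filter (· ∈ A) = t.1 then v h.choose else (∅, 0)
  refine ⟨emb ⟨s, f0⟩, ?_⟩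
  intro A hA
  have hgj : g (emb ⟨s, f0⟩) = ⟨s, f0⟩ := hg _
  show (g (emb ⟨s, f0⟩)).2 ⟨(g (emb ⟨s, f0⟩)).1.filter (· ∈ A), Finset.filter_subset _ _⟩ = v A
  rw [hgj]
  show f0 ⟨s.filter (· ∈ A), Finset.filter_subset _ _⟩ = v A
  have hex : ∃ A', A' ∈ T ∧ s.filter (· ∈ A') = s.filter (· ∈ A) := ⟨A, hA, rfl⟩
  have : f0 ⟨s.filter (· ∈ A), Finset.filter_subset _ _⟩ = v hex.choose := dif_pos hex
  rw [this]
  obtain ⟨hmem, heq⟩ := hex.choose_spec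
  by_cases h : hex.choose = A
  · rw [h]
  · exact absurd heq (sep _ hmem _ hA h)

theorem InGen.mono {D D' : Set (Set α)} {X : Set α} (hDD : D ⊆ D') (h : InGen D X) :
    InGen D' X := by
  obtain ⟨E, hE, hfin, hsub⟩ := h
  exact ⟨E, hE.trans hDD, hfin, hsub⟩

theorem ind_base (hG : Indep G) : Ind G (D0 G) (K0 α) := by
  intro T v E hT hE hEfin
  have key : ∀ (E : Set (Set α)), E.Finite → E ⊆ D0 G →
      ∃ N : ℕ, ∀ i, N ≤ (G ∅ i).2 → i ∈ ⋂₀ E := by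
    intro E hEfin
    refine Set.Finite.induction_on E hEfin (fun _ => ⟨0, fun i _ => by simp⟩) ?_
    intro a E' _ _ IH hsub
    obtain ⟨N, hN⟩ := IH (fun x hx => hsub (Set.mem_insert_of_mem _ hx))
    obtain ⟨n, hn⟩ := hsub (Set.mem_insert _ _)
    refine ⟨max n N, fun i hi => ?_⟩
    rw [Set.sInter_insert]
    exact ⟨hn ▸ le_trans (le_max_left _ _) hi, hN i (le_trans (le_max_right _ _) hi)⟩
  obtain ⟨N, hN⟩ := key E hEfin hE
  set v' : Set α → Finset α × ℕ := fun B => if B = (∅ : Set α) then ((∅ : Finset α), N) else v B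
  obtain ⟨i, hi⟩ := hG (insert ∅ T) v'
  refine ⟨i, Set.mem_inter ?_ ?_⟩
  · intro A hA
    have hne : A ≠ ∅ := by
      have := hT hA
      simpa [K0] using this
    rw [hi A (Finset.mem_insert_of_mem hA)]
    exact if_neg hne
  · have hA0 : G ∅ i = ((∅ : Finset α), N) := by
      rw [hi ∅ (Finset.mem_insert_self _ _)]
      exact if_pos rfl
    exact hN i (by rw [hA0])

theorem step_p (hG : Indep G) {D K : Set (Set α)} (hInd : Ind G D K) {A : Set α} (hA : A ∈ K)
    {p : Finset α → Set α} (hmono : ∀ s t, s ⊆ t → p t ⊆ p s) (hp : ∀ s, InGen D (p s)) :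
    ∃ q : Finset α → Set α, (∀ s t, q (s ∪ t) = q s ∩ q t) ∧ (∀ s, q s ⊆ p s) ∧
      Ind G (D ∪ Set.range q) (K \ {A}) := by
  set f : α → Finset α := fun i => (G A i).1 with hf
  set q : Finset α → Set α := fun s => {i | s ⊆ f i ∧ i ∈ p (f i)} with hq
  have hanti : ∀ s t, q (s ∪ t) = q s ∩ q t := by
    intro s t
    ext i
    simp only [hq, Set.mem_setOf_eq, Set.mem_inter_iff, Finset.union_subset_iff]
    tauto
  have hle : ∀ s, q s ⊆ p s := fun s i hi => hmono s (f i) hi.1 hi.2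
  refine ⟨q, hanti, hle, ?_⟩
  intro T v E hT hE hEfin
  have key : ∀ (Y : Set (Set α)), Y.Finite → Y ⊆ Set.range q → ∃ s₀, q s₀ ⊆ ⋂₀ Y := by
    intro Y hY
    refine Set.Finite.induction_on Y hY (fun _ => ⟨∅, by simp⟩) ?_
    intro a Y' _ _ IH hsub
    obtain ⟨s₀, hs₀⟩ := IH (fun x hx => hsub (Set.mem_insert_of_mem _ hx))
    obtain ⟨sa, hsa⟩ := hsub (Set.mem_insert _ _)
    refine ⟨sa ∪ s₀, ?_⟩
    rw [Set.sInter_insert, hanti]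
    exact Set.inter_subset_inter (hsa ▸ Set.Subset.rfl) hs₀
  obtain ⟨s₀, hs₀⟩ := key (E \ D) (hEfin.diff (t := D))
    (fun x hx => (hE hx.1).resolve_left hx.2)
  obtain ⟨Ep, hEp, hEpfin, hEpsub⟩ := hp s₀
  set v' : Set α → Finset α × ℕ := fun B => if B = A then (s₀, (0 : ℕ)) else v B
  have hTK : ↑(insert A T) ⊆ K := by
    rw [Finset.coe_insert]
    rintro x (rfl | hx)
    · exact hA
    · exact (hT hx).1
  obtain ⟨i, hiC, hiI⟩ := hInd (insert A T) v' ((E ∩ D) ∪ Ep) hTK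
    (Set.union_subset Set.inter_subset_right hEp) ((hEfin.inter_of_left D).union hEpfin)
  have hGAi : G A i = (s₀, 0) := by
    rw [hiC A (Finset.mem_insert_self _ _)]
    exact if_pos rfl
  rw [Set.sInter_union] at hiI
  refine ⟨i, Set.mem_inter ?_ ?_⟩
  · intro B hB
    have hne : B ≠ A := fun h => (hT hB).2 (by simp [h])
    rw [hiC B (Finset.mem_insert_of_mem hB)]
    exact if_neg hne
  · rw [Set.mem_sInter]
    intro x hx
    by_cases hxD : x ∈ D
    · exact Set.mem_sInter.1 hiI.1 x ⟨hx, hxD⟩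
    · have hfi : f i = s₀ := by show (G A i).1 = s₀; rw [hGAi]
      have hiq : i ∈ q s₀ := by
        show s₀ ⊆ f i ∧ i ∈ p (f i)
        rw [hfi]
        exact ⟨Finset.Subset.refl _, hEpsub hiI.2⟩
      exact Set.mem_sInter.1 (hs₀ hiq) x ⟨hx, hxD⟩

theorem step_X {D K : Set (Set α)} (hInd : Ind G D K) (X : Set α) :
    ∃ R : Finset (Set α), Ind G (D ∪ {X}) (K \ ↑R) ∨ Ind G (D ∪ {Xᶜ}) (K \ ↑R) := by
  by_cases h : Ind G (D ∪ {X}) K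
  · refine ⟨∅, Or.inl ?_⟩
    intro T v E hT hE hEfin
    exact h T v E (by simpa using hT) hE hEfin
  · simp only [Ind, not_forall] at h
    obtain ⟨T, v, E, hT, hE, hEfin, hempty⟩ := h
    have hXE : X ∈ E := by
      by_contra hXE
      refine hempty (hInd T v E hT (fun x hx => ?_) hEfin)
      rcases hE hx with hxD | hxX
      · exact hxD
      · exact absurd (hxX ▸ hx) hXE
    refine ⟨T, Or.inr ?_⟩
    intro T' v' E' hT' hE' hE'fin
    set vv : Set α → Finset α × ℕ := fun B => if B ∈ T then v B else v' B
    have hsub : ↑(T ∪ T') ⊆ K := by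
      rw [Finset.coe_union]
      exact Set.union_subset hT (fun x hx => (hT' hx).1)
    obtain ⟨i, hiC, hiI⟩ := hInd (T ∪ T') vv ((E \ {X}) ∪ (E' \ {Xᶜ})) hsub
      (Set.union_subset
        (fun x hx => ((hE hx.1).resolve_right (by simpa using hx.2)))
        (fun x hx => ((hE' hx.1).resolve_right (by simpa using hx.2))))
      (hEfin.diff.union hE'fin.diff)
    rw [Set.sInter_union] at hiI
    have hiXc : i ∈ Xᶜ := by
      intro hiX
      refine hempty ⟨i, Set.mem_inter ?_ ?_⟩
      · intro B hB
        rw [hiC B (Finset.mem_union_left _ hB)]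
        exact if_pos hB
      · rw [Set.mem_sInter]
        intro x hx
        by_cases hxX : x = X
        · exact hxX ▸ hiX
        · exact Set.mem_sInter.1 hiI.1 x ⟨hx, by simpa using hxX⟩
    refine ⟨i, Set.mem_inter ?_ ?_⟩
    · intro B hB
      have hBT : B ∉ T := (hT' hB).2
      rw [hiC B (Finset.mem_union_right _ hB)]
      exact if_neg hBT
    · rw [Set.mem_sInter]
      intro x hx
      by_cases hxX : x = Xᶜ
      · exact hxX ▸ hiXc
      · exact Set.mem_sInter.1 hiI.2 x ⟨hx, by simpa using hxX⟩

theorem step_full (hG : Indep G) {D K : Set (Set α)} (hInd : Ind G D K) (hK : K.Infinite)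
    (X : Set α) (p : Finset α → Set α) :
    ∃ NR : Set (Set α) × Set (Set α), NR.2.Finite ∧
      Ind G (D ∪ NR.1) (K \ NR.2) ∧
      (InGen (D ∪ NR.1) X ∨ InGen (D ∪ NR.1) Xᶜ) ∧
      (((∀ s t : Finset α, s ⊆ t → p t ⊆ p s) ∧ ∀ s, InGen D (p s)) →
        ∃ q : Finset α → Set α, (∀ s t, q (s ∪ t) = q s ∩ q t) ∧ (∀ s, q s ⊆ p s) ∧
          ∀ s, q s ∈ NR.1) := by
  obtain ⟨R, hR⟩ := step_X G hInd X
  have main : ∀ Y : Set α, Ind G (D ∪ {Y}) (K \ ↑R) →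
      ∃ NR : Set (Set α) × Set (Set α), NR.2.Finite ∧
        Ind G (D ∪ NR.1) (K \ NR.2) ∧ InGen (D ∪ NR.1) Y ∧
        (((∀ s t : Finset α, s ⊆ t → p t ⊆ p s) ∧ ∀ s, InGen D (p s)) →
          ∃ q : Finset α → Set α, (∀ s t, q (s ∪ t) = q s ∩ q t) ∧ (∀ s, q s ⊆ p s) ∧
            ∀ s, q s ∈ NR.1) := by
    intro Y hIndY
    have hYmem : InGen (D ∪ ({Y} ∪ Set.range (fun _ : Finset α => (∅:Set α)))) Y ∨ True := Or.inr trivial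
    by_cases hp : (∀ s t : Finset α, s ⊆ t → p t ⊆ p s) ∧ ∀ s, InGen D (p s)
    · obtain ⟨A, hA⟩ := (hK.diff R.finite_toSet).nonempty
      obtain ⟨q, hq1, hq2, hIndq⟩ := step_p G hG hIndY hA hp.1
        (fun s => (hp.2 s).mono Set.subset_union_left)
      refine ⟨({Y} ∪ Set.range q, ↑R ∪ {A}), ?_, ?_, ?_, ?_⟩
      · exact R.finite_toSet.union (Set.finite_singleton _)
      · rw [← Set.union_assoc, ← Set.diff_diff]
        exact hIndq
      · exact ⟨{Y}, fun x hx => Or.inr (Or.inl hx), Set.finite_singleton _, by simp⟩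
      · intro _
        exact ⟨q, hq1, hq2, fun s => Or.inr ⟨s, rfl⟩⟩
    · refine ⟨({Y}, ↑R), R.finite_toSet, hIndY, ?_, fun h => absurd h hp⟩
      exact ⟨{Y}, fun x hx => Or.inr hx, Set.finite_singleton _, by simp⟩
  rcases hR with hIndY | hIndY
  · obtain ⟨NR, h1, h2, h3, h4⟩ := main X hIndY
    exact ⟨NR, h1, h2, Or.inl h3, h4⟩
  · obtain ⟨NR, h1, h2, h3, h4⟩ := main Xᶜ hIndY
    exact ⟨NR, h1, h2, Or.inr h3, h4⟩

/-- The stage index: a well order of type `(2 ^ #α).ord`. -/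
abbrev OT (α : Type u) : Type u := (Cardinal.ord (2 ^ #α)).ToType

variable (hG : Indep G) (e : OT α → (Finset α → Set α) × Set α)

def histD (γ : OT α) (ih : ∀ β : OT α, β < γ → Set (Set α) × Set (Set α)) : Set (Set α) :=
  D0 G ∪ ⋃ b : {β : OT α // β < γ}, (ih b.1 b.2).1

def histK (γ : OT α) (ih : ∀ β : OT α, β < γ → Set (Set α) × Set (Set α)) : Set (Set α) :=
  K0 α \ ⋃ b : {β : OT α // β < γ}, (ih b.1 b.2).2

include hG in
theorem spec_nonempty (γ : OT α) (ih : ∀ β : OT α, β < γ → Set (Set α) × Set (Set α)) :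
    ∃ NR : Set (Set α) × Set (Set α), NR.2.Finite ∧
      (Ind G (histD G γ ih) (histK γ ih) → (histK γ ih).Infinite →
        (Ind G (histD G γ ih ∪ NR.1) (histK γ ih \ NR.2) ∧
        (InGen (histD G γ ih ∪ NR.1) (e γ).2 ∨ InGen (histD G γ ih ∪ NR.1) ((e γ).2)ᶜ) ∧
        (((∀ s t : Finset α, s ⊆ t → (e γ).1 t ⊆ (e γ).1 s) ∧
            ∀ s, InGen (histD G γ ih) ((e γ).1 s)) →
          ∃ q : Finset α → Set α, (∀ s t, q (s ∪ t) = q s ∩ q t) ∧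
            (∀ s, q s ⊆ (e γ).1 s) ∧ ∀ s, q s ∈ NR.1))) := by
  by_cases h1 : Ind G (histD G γ ih) (histK γ ih)
  · by_cases h2 : (histK γ ih).Infinite
    · obtain ⟨NR, hfin, h3, h4, h5⟩ := step_full G hG h1 h2 (e γ).2 (e γ).1
      exact ⟨NR, hfin, fun _ _ => ⟨h3, h4, h5⟩⟩
    · exact ⟨(∅, ∅), Set.finite_empty, fun _ hh => absurd hh h2⟩
  · exact ⟨(∅, ∅), Set.finite_empty, fun hh _ => absurd hh h1⟩

noncomputable def chain : OT α → Set (Set α) × Set (Set α) :=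
  (IsWellFounded.wf (α := OT α) (r := (· < ·))).fix
    fun γ ih => Classical.choose (spec_nonempty G hG e γ ih)

theorem chain_eq (γ : OT α) :
    chain G hG e γ =
      Classical.choose (spec_nonempty G hG e γ (fun β _ => chain G hG e β)) :=
  WellFounded.fix_eq _ _ _

noncomputable def cD (γ : OT α) : Set (Set α) := histD G γ (fun β _ => chain G hG e β)

noncomputable def cK (γ : OT α) : Set (Set α) := histK γ (fun β _ => chain G hG e β)

theorem chain_spec (γ : OT α) :
    (chain G hG e γ).2.Finite ∧
      (Ind G (cD G hG e γ) (cK G hG e γ) → (cK G hG e γ).Infinite →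
        (Ind G (cD G hG e γ ∪ (chain G hG e γ).1) (cK G hG e γ \ (chain G hG e γ).2) ∧
        (InGen (cD G hG e γ ∪ (chain G hG e γ).1) (e γ).2 ∨
          InGen (cD G hG e γ ∪ (chain G hG e γ).1) ((e γ).2)ᶜ) ∧
        (((∀ s t : Finset α, s ⊆ t → (e γ).1 t ⊆ (e γ).1 s) ∧
            ∀ s, InGen (cD G hG e γ) ((e γ).1 s)) →
          ∃ q : Finset α → Set α, (∀ s t, q (s ∪ t) = q s ∩ q t) ∧
            (∀ s, q s ⊆ (e γ).1 s) ∧ ∀ s, q s ∈ (chain G hG e γ).1))) := by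
  rw [chain_eq]
  exact Classical.choose_spec (spec_nonempty G hG e γ (fun β _ => chain G hG e β))

theorem D0_subset_cD (γ : OT α) : D0 G ⊆ cD G hG e γ :=
  fun x hx => Set.mem_union_left _ hx

theorem cD_union_subset {β γ : OT α} (h : β < γ) :
    cD G hG e β ∪ (chain G hG e β).1 ⊆ cD G hG e γ := by
  intro x hx
  rcases (Set.mem_union _ _ _).1 hx with hx | hx
  · rcases (Set.mem_union _ _ _).1 hx with hx | hx
    · exact Set.mem_union_left _ hx
    · obtain ⟨b, hb⟩ := Set.mem_iUnion.1 hx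
      exact Set.mem_union_right _ (Set.mem_iUnion.2 ⟨⟨b.1, lt_trans b.2 h⟩, hb⟩)
  · exact Set.mem_union_right _ (Set.mem_iUnion.2 ⟨⟨β, h⟩, hx⟩)

theorem cDN_mono {β γ : OT α} (h : β ≤ γ) :
    cD G hG e β ∪ (chain G hG e β).1 ⊆ cD G hG e γ ∪ (chain G hG e γ).1 := by
  rcases lt_or_eq_of_le h with h | rfl
  · exact (cD_union_subset G hG e h).trans Set.subset_union_left
  · exact Set.Subset.rfl

theorem cK_subset_K0 (γ : OT α) : cK G hG e γ ⊆ K0 α := Set.diff_subset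

theorem cK_subset {β γ : OT α} (h : β < γ) :
    cK G hG e γ ⊆ cK G hG e β \ (chain G hG e β).2 := by
  intro x hx
  obtain ⟨hx0, hx1⟩ := Set.mem_diff _ |>.1 hx
  refine Set.mem_diff _ |>.2 ⟨Set.mem_diff _ |>.2 ⟨hx0, fun hmem => ?_⟩, fun hmem => ?_⟩
  · obtain ⟨b, hb⟩ := Set.mem_iUnion.1 hmem
    exact hx1 (Set.mem_iUnion.2 ⟨⟨b.1, lt_trans b.2 h⟩, hb⟩)
  · exact hx1 (Set.mem_iUnion.2 ⟨⟨β, h⟩, hmem⟩)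

theorem cover {S : Set (OT α)} {E : Set (Set α)} (hE : E.Finite) :
    (∀ x ∈ E, x ∈ D0 G ∨ ∃ β ∈ S, x ∈ (chain G hG e β).1) →
    E ⊆ D0 G ∨ ∃ β ∈ S, E ⊆ cD G hG e β ∪ (chain G hG e β).1 := by
  refine Set.Finite.induction_on E hE (fun _ => Or.inl (Set.empty_subset _)) ?_
  intro a E' _ _ IH hsub
  rcases IH (fun x hx => hsub x (Set.mem_insert_of_mem _ hx)) with hD0 | ⟨β, hβS, hcov⟩
  · rcases hsub a (Set.mem_insert _ _) with haD0 | ⟨βa, hβaS, haN⟩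
    · exact Or.inl (Set.insert_subset haD0 hD0)
    · refine Or.inr ⟨βa, hβaS, Set.insert_subset (Set.mem_union_right _ haN)
        (hD0.trans ((D0_subset_cD G hG e βa).trans Set.subset_union_left))⟩
  · rcases hsub a (Set.mem_insert _ _) with haD0 | ⟨βa, hβaS, haN⟩
    · exact Or.inr ⟨β, hβS, Set.insert_subset
        (Set.mem_union_left _ (D0_subset_cD G hG e β haD0)) hcov⟩
    · rcases le_total β βa with hle | hle
      · exact Or.inr ⟨βa, hβaS, Set.insert_subset (Set.mem_union_right _ haN)
          (hcov.trans (cDN_mono G hG e hle))⟩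
      · exact Or.inr ⟨β, hβS, Set.insert_subset
          ((cDN_mono G hG e hle) (Set.mem_union_right _ haN)) hcov⟩

theorem ind_cD (γ : OT α)
    (IH : ∀ β, β < γ →
      Ind G (cD G hG e β ∪ (chain G hG e β).1) (cK G hG e β \ (chain G hG e β).2)) :
    Ind G (cD G hG e γ) (cK G hG e γ) := by
  intro T v E hT hE hEfin
  have hsub : ∀ x ∈ E, x ∈ D0 G ∨ ∃ β ∈ Set.Iio γ, x ∈ (chain G hG e β).1 := by
    intro x hx
    have hx' := hE hx
    simp only [cD, histD, Set.mem_union] at hx'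
    rcases hx' with h | h
    · exact Or.inl h
    · obtain ⟨b, hb⟩ := Set.mem_iUnion.1 h
      exact Or.inr ⟨b.1, b.2, hb⟩
  rcases cover G hG e hEfin hsub with hD0 | ⟨β, hβ, hcovE⟩
  · exact ind_base G hG T v E (hT.trans (cK_subset_K0 G hG e γ)) hD0 hEfin
  · exact IH β hβ T v E (hT.trans (cK_subset G hG e hβ)) hcovE hEfin

theorem cK_infinite (γ : OT α) : (cK G hG e γ).Infinite := by
  by_contra hfin
  rw [Set.not_infinite] at hfin
  have h2 : #{β : OT α // β < γ} < 2 ^ #α := by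
    exact Cardinal.lt_ord.1 (Ordinal.typein_lt_self γ)
  have h1 : #(⋃ b : {β : OT α // β < γ}, (chain G hG e b.1).2 : Set (Set α))
      ≤ #{β : OT α // β < γ} * ℵ₀ := by
    refine Cardinal.mk_iUnion_le_sum_mk.trans ?_
    refine (Cardinal.sum_le_sum _ (fun _ => ℵ₀) fun b => ?_).trans ?_
    · exact (Cardinal.lt_aleph0_iff_set_finite.2 (chain_spec G hG e b.1).1).le
    · rw [Cardinal.sum_const']
  have haleph : ℵ₀ ≤ 2 ^ #α := (Cardinal.aleph0_le_mk α).trans (Cardinal.cantor _).le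
  have h3 : #(⋃ b : {β : OT α // β < γ}, (chain G hG e b.1).2 : Set (Set α)) < 2 ^ #α :=
    h1.trans_lt (Cardinal.mul_lt_of_lt haleph h2
      ((Cardinal.aleph0_le_mk α).trans_lt (Cardinal.cantor _)))
  haveI hinf : Infinite (Set α) :=
    Infinite.of_injective (fun a : α => ({a} : Set α))
      (fun a b h => Set.singleton_eq_singleton_iff.1 h)
  have hK0 : #(K0 α : Set (Set α)) = 2 ^ #α := by
    rw [K0, Cardinal.mk_compl_of_infinite ({(∅ : Set α)} : Set (Set α)) ?_, mk_set]
    rw [Cardinal.mk_singleton]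
    exact Cardinal.one_lt_aleph0.trans_le (Cardinal.aleph0_le_mk _)
  have hsubK : K0 α ⊆ cK G hG e γ ∪ (⋃ b : {β : OT α // β < γ}, (chain G hG e b.1).2) := by
    intro x hx
    by_cases h : x ∈ (⋃ b : {β : OT α // β < γ}, (chain G hG e b.1).2)
    · exact Set.mem_union_right _ h
    · exact Set.mem_union_left _ ⟨hx, h⟩
  have hle : (2 : Cardinal) ^ #α ≤ #(cK G hG e γ)
      + #(⋃ b : {β : OT α // β < γ}, (chain G hG e b.1).2 : Set (Set α)) := by
    calc (2 : Cardinal) ^ #α = #(K0 α : Set (Set α)) := hK0.symm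
    _ ≤ #(↥(cK G hG e γ ∪ (⋃ b : {β : OT α // β < γ}, (chain G hG e b.1).2))) :=
        Cardinal.mk_le_mk_of_subset hsubK
    _ ≤ _ := Cardinal.mk_union_le _ _
  have hlt : #(cK G hG e γ)
      + #(⋃ b : {β : OT α // β < γ}, (chain G hG e b.1).2 : Set (Set α)) < 2 ^ #α :=
    Cardinal.add_lt_of_lt haleph
      ((Cardinal.lt_aleph0_iff_set_finite.2 hfin).trans_le haleph) h3
  exact absurd hle (not_le.2 hlt)

theorem good (γ : OT α) :
    Ind G (cD G hG e γ ∪ (chain G hG e γ).1) (cK G hG e γ \ (chain G hG e γ).2) :=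
  (IsWellFounded.wf (α := OT α) (r := (· < ·))).induction γ
    (fun γ IH => ((chain_spec G hG e γ).2 (ind_cD G hG e γ IH) (cK_infinite G hG e γ)).1)

theorem realSpec (γ : OT α) :
    (InGen (cD G hG e γ ∪ (chain G hG e γ).1) (e γ).2 ∨
      InGen (cD G hG e γ ∪ (chain G hG e γ).1) ((e γ).2)ᶜ) ∧
    (((∀ s t : Finset α, s ⊆ t → (e γ).1 t ⊆ (e γ).1 s) ∧
        ∀ s, InGen (cD G hG e γ) ((e γ).1 s)) →
      ∃ q : Finset α → Set α, (∀ s t, q (s ∪ t) = q s ∩ q t) ∧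
        (∀ s, q s ⊆ (e γ).1 s) ∧ ∀ s, q s ∈ (chain G hG e γ).1) :=
  ((chain_spec G hG e γ).2 (ind_cD G hG e γ (fun β _ => good G hG e β))
    (cK_infinite G hG e γ)).2

noncomputable def tin (γ : OT α) : Ordinal :=
  @Ordinal.typein (OT α) (· < ·) isWellOrder_lt γ

theorem tin_lt_self (γ : OT α) : tin γ < ((2 : Cardinal) ^ #α).ord :=
  Ordinal.typein_lt_self γ

theorem tin_lt_tin {β γ : OT α} : tin β < tin γ ↔ β < γ :=
  @Ordinal.typein_lt_typein _ (· < ·) isWellOrder_lt _ _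

theorem exists_big_stage (E : OT α ≃ ((Finset α → Set α) × Set α) × OT α)
    (v : (Finset α → Set α) × Set α) {o0 : Ordinal} (ho : o0 < ((2 : Cardinal) ^ #α).ord) :
    ∃ γ : OT α, (E γ).1 = v ∧ o0 < tin γ := by
  by_contra hcon
  push_neg at hcon
  have hsucc : Order.succ o0 < ((2 : Cardinal) ^ #α).ord :=
    (Cardinal.isSuccLimit_ord ((Cardinal.aleph0_le_mk α).trans (Cardinal.cantor _).le)).succ_lt ho
  have hsucc' : Order.succ o0 < @Ordinal.type (OT α) (· < ·) isWellOrder_lt :=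
    lt_of_lt_of_eq hsucc (Ordinal.type_toType _).symm
  set δ : OT α := @Ordinal.enum (OT α) (· < ·) isWellOrder_lt ⟨Order.succ o0, hsucc'⟩ with hδ
  have htyδ : tin δ = Order.succ o0 := @Ordinal.typein_enum _ (· < ·) isWellOrder_lt _ _
  have hlt : ∀ d : OT α, E.symm (v, d) < δ := by
    intro d
    have hv : (E (E.symm (v, d))).1 = v := by rw [Equiv.apply_symm_apply]
    have h1 := hcon (E.symm (v, d)) hv
    have h2 : tin (E.symm (v, d)) < tin δ := by
      rw [htyδ]
      exact h1.trans_lt (Order.lt_succ _)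
    exact tin_lt_tin.1 h2
  have hinj : Function.Injective
      (fun d : OT α => (⟨E.symm (v, d), hlt d⟩ : {x : OT α // x < δ})) := by
    intro a b h
    have h2 : E.symm (v, a) = E.symm (v, b) := congrArg Subtype.val h
    have h3 : ((v, a) : ((Finset α → Set α) × Set α) × OT α) = (v, b) := E.symm.injective h2
    exact (Prod.mk.injEq _ _ _ _ ▸ h3).2
  have hle : #(OT α) ≤ #{x : OT α // x < δ} := Cardinal.mk_le_of_injective hinj
  have h1 : #(OT α) = 2 ^ #α := by rw [Cardinal.mk_toType, Cardinal.card_ord]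
  have h2 : #{x : OT α // x < δ} < 2 ^ #α :=
    Cardinal.lt_ord.1 (tin_lt_self δ)
  rw [h1] at hle
  exact absurd (hle.trans_lt h2) (lt_irrefl _)

end Stmt19

/-- For every infinite cardinal `κ` (represented by an infinite type `α`), there is
a countably incomplete ultrafilter on `κ` which is `κ⁺`-good: every order-reversal
`p : 𝒫^{<ω}(κ) → U` dominates an anti-additive map `q : 𝒫^{<ω}(κ) → U`. -/
theorem stmt19 {α : Type*} [Infinite α] [DecidableEq α] :
    ∃ U : Ultrafilter α,
      (∃ A : ℕ → Set α, (∀ n, A n ∈ U) ∧ (⋂ n, A n) ∉ U) ∧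
      ∀ p : Finset α → Set α, (∀ s, p s ∈ U) →
        (∀ s t : Finset α, s ⊆ t → p t ⊆ p s) →
        ∃ q : Finset α → Set α, (∀ s, q s ∈ U) ∧
          (∀ s t : Finset α, q (s ∪ t) = q s ∩ q t) ∧ ∀ s, q s ⊆ p s := by
  classical
  obtain ⟨G, hG⟩ := Stmt19.exists_indep α
  have hOT : #(Stmt19.OT α) = 2 ^ #α := by rw [Cardinal.mk_toType, Cardinal.card_ord]
  have haleph : ℵ₀ ≤ (2 : Cardinal) ^ #α :=
    (Cardinal.aleph0_le_mk α).trans (Cardinal.cantor _).le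
  obtain ⟨E⟩ : Nonempty (Stmt19.OT α ≃ ((Finset α → Set α) × Set α) × Stmt19.OT α) := by
    rw [← Cardinal.eq]
    have hP : #((Finset α → Set α) × Set α) = 2 ^ #α := by
      rw [Cardinal.mk_prod, Cardinal.lift_id, Cardinal.lift_id, Cardinal.mk_arrow,
        Cardinal.lift_id, Cardinal.lift_id, Cardinal.mk_set, Cardinal.mk_finset_of_infinite]
      have h1 : ((2 : Cardinal) ^ #α) ^ #α = 2 ^ #α := by
        rw [← Cardinal.power_mul, Cardinal.mul_eq_self (Cardinal.aleph0_le_mk α)]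
      rw [h1, Cardinal.mul_eq_self haleph]
    rw [hOT, Cardinal.mk_prod, Cardinal.lift_id, Cardinal.lift_id, hP, hOT,
      Cardinal.mul_eq_self haleph]
  have hne : Nonempty (Stmt19.OT α) := by
    rw [Ordinal.toType_nonempty_iff_ne_zero]
    intro h0
    rw [Cardinal.ord_eq_zero] at h0
    exact Cardinal.power_ne_zero (#α) two_ne_zero h0
  set e : Stmt19.OT α → (Finset α → Set α) × Set α := fun γ => (E γ).1 with he
  set Dinf : Set (Set α) := Stmt19.D0 G ∪ ⋃ γ : Stmt19.OT α, (Stmt19.chain G hG e γ).1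
    with hDinf
  set F : Filter α := Filter.generate Dinf with hF
  have hsubinf : ∀ γ, Stmt19.cD G hG e γ ∪ (Stmt19.chain G hG e γ).1 ⊆ Dinf := by
    intro γ x hx
    rcases (Set.mem_union _ _ _).1 hx with hx | hx
    · rcases (Set.mem_union _ _ _).1 hx with hx | hx
      · exact Set.mem_union_left _ hx
      · obtain ⟨b, hb⟩ := Set.mem_iUnion.1 hx
        exact Set.mem_union_right _ (Set.mem_iUnion.2 ⟨b.1, hb⟩)
    · exact Set.mem_union_right _ (Set.mem_iUnion.2 ⟨γ, hx⟩)
  have hcovD : ∀ (t : Set (Set α)), t.Finite → t ⊆ Dinf →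
      t ⊆ Stmt19.D0 G ∨ ∃ β, t ⊆ Stmt19.cD G hG e β ∪ (Stmt19.chain G hG e β).1 := by
    intro t ht hsub
    have hmem : ∀ x ∈ t, x ∈ Stmt19.D0 G ∨
        ∃ β ∈ (Set.univ : Set (Stmt19.OT α)), x ∈ (Stmt19.chain G hG e β).1 := by
      intro x hx
      rcases (Set.mem_union _ _ _).1 (hsub hx) with h | h
      · exact Or.inl h
      · obtain ⟨b, hb⟩ := Set.mem_iUnion.1 h
        exact Or.inr ⟨b, Set.mem_univ _, hb⟩
    rcases Stmt19.cover G hG e ht hmem with h | ⟨β, _, h⟩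
    · exact Or.inl h
    · exact Or.inr ⟨β, h⟩
  have hproper : ∀ t ⊆ Dinf, t.Finite → (⋂₀ t).Nonempty := by
    intro t hsub ht
    rcases hcovD t ht hsub with h | ⟨β, h⟩
    · obtain ⟨i, hi⟩ := Stmt19.ind_base G hG ∅ (fun _ => (∅, 0)) t (by simp) h ht
      exact ⟨i, hi.2⟩
    · obtain ⟨i, hi⟩ := Stmt19.good G hG e β ∅ (fun _ => (∅, 0)) t (by simp) h ht
      exact ⟨i, hi.2⟩
  have hNeBot : F.NeBot := by
    rw [hF, Filter.generate_neBot_iff]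
    exact hproper
  have hmemF : ∀ {D' : Set (Set α)} {X : Set α}, D' ⊆ Dinf → Stmt19.InGen D' X → X ∈ F := by
    intro D' X hD' hX
    obtain ⟨E', hE1, hE2, hE3⟩ := hX
    rw [hF]
    exact Filter.mem_generate_iff.2 ⟨E', hE1.trans hD', hE2, hE3⟩
  have htotal : ∀ X : Set α, X ∈ F ∨ Xᶜ ∈ F := by
    intro X
    obtain ⟨δ0⟩ := hne
    set γ := E.symm ((fun _ => Set.univ, X), δ0) with hγ
    have he1 : e γ = (fun _ => Set.univ, X) := by
      rw [he]
      show (E (E.symm _)).1 = _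
      rw [Equiv.apply_symm_apply]
    have hor := (Stmt19.realSpec G hG e γ).1
    rw [he1] at hor
    rcases hor with h | h
    · exact Or.inl (hmemF (hsubinf γ) h)
    · exact Or.inr (hmemF (hsubinf γ) h)
  haveI := hNeBot
  have hcompl : ∀ s : Set α, sᶜ ∉ F ↔ s ∈ F := by
    intro s
    constructor
    · intro h
      exact (htotal s).resolve_right h
    · intro hs hsc
      have hi := F.inter_mem hs hsc
      rw [Set.inter_compl_self] at hi
      exact Filter.empty_notMem F hi
  refine ⟨Ultrafilter.ofComplNotMemIff F hcompl, ⟨fun n => {i | n ≤ (G ∅ i).2}, ?_, ?_⟩, ?_⟩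
  · intro n
    show {i | n ≤ (G ∅ i).2} ∈ F
    refine hmemF (Set.subset_union_left) ?_
    exact ⟨{{i | n ≤ (G ∅ i).2}}, Set.singleton_subset_iff.2 ⟨n, rfl⟩,
      Set.finite_singleton _, by rw [Set.sInter_singleton]⟩
  · have hempty : (⋂ n, {i : α | n ≤ (G ∅ i).2}) = ∅ := by
      ext i
      simp only [Set.mem_iInter, Set.mem_setOf_eq, Set.mem_empty_iff_false, iff_false,
        not_forall, not_le]
      exact ⟨(G ∅ i).2 + 1, by omega⟩
    show (⋂ n, {i : α | n ≤ (G ∅ i).2}) ∉ F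
    rw [hempty]
    exact Filter.empty_notMem F
  · intro p hpU hpmono
    have hstage : ∀ s : Finset α, ∃ β : Stmt19.OT α,
        Stmt19.InGen (Stmt19.cD G hG e β ∪ (Stmt19.chain G hG e β).1) (p s) := by
      intro s
      have hmem : p s ∈ F := hpU s
      rw [hF, Filter.mem_generate_iff] at hmem
      obtain ⟨t, ht1, ht2, ht3⟩ := hmem
      rcases hcovD t ht2 ht1 with h | ⟨β, h⟩
      · obtain ⟨β⟩ := hne
        exact ⟨β, t, h.trans ((Stmt19.D0_subset_cD G hG e β).trans Set.subset_union_left),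
          ht2, ht3⟩
      · exact ⟨β, t, h, ht2, ht3⟩
    choose φ hφ using hstage
    have hcof : #(Finset α) < ((2 ^ #α : Cardinal).ord).cof := by
      rw [Cardinal.mk_finset_of_infinite]
      exact Cardinal.lt_cof_power (Cardinal.aleph0_le_mk α) one_lt_two
    have hsup : (⨆ s : Finset α, Stmt19.tin (φ s)) < ((2 : Cardinal) ^ #α).ord :=
      Ordinal.iSup_lt_ord hcof (fun s => Stmt19.tin_lt_self _)
    obtain ⟨γ, hγ1, hγ2⟩ := Stmt19.exists_big_stage E (p, ∅) hsup
    have he1 : e γ = (p, ∅) := hγ1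
    have hγs : ∀ s : Finset α, φ s < γ := by
      intro s
      have h1 : Stmt19.tin (φ s) ≤ ⨆ s : Finset α, Stmt19.tin (φ s) :=
        Ordinal.le_iSup _ s
      exact Stmt19.tin_lt_tin.1 (h1.trans_lt hγ2)
    have hInGen : ∀ s, Stmt19.InGen (Stmt19.cD G hG e γ) (p s) := by
      intro s
      obtain ⟨t, h1, h2, h3⟩ := hφ s
      exact ⟨t, h1.trans (Stmt19.cD_union_subset G hG e (hγs s)), h2, h3⟩
    have hq := (Stmt19.realSpec G hG e γ).2 (by rw [he1]; exact ⟨hpmono, hInGen⟩)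
    rw [he1] at hq
    obtain ⟨q, hq1, hq2, hq3⟩ := hq
    refine ⟨q, fun s => ?_, hq1, hq2⟩
    show q s ∈ F
    refine hmemF (hsubinf γ) ?_
    exact ⟨{q s}, Set.singleton_subset_iff.2 (Set.mem_union_right _ (hq3 s)),
      Set.finite_singleton _, by rw [Set.sInter_singleton]⟩
end
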